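/- arXiv:1509.07428 — 2 statements merged into one kernel-verified Lean document; each statement's English description precedes it below -/
import Mathlib

section
/- Let X be an infinite-dimensional complex Banach space and T ∈ L(X). If T fails to admit an almost-invariant halfspace of defect ≤ 1, then there exists a vector e ∈ X such that the closed linear span of the orbit {T^n e : n = 0, 1, 2, ...} has finite codimension in X. -/
/-- A halfspace of a Banach space `X`: a closed subspace of infinite dimension
and infinite codimension. -/
def IsHalfspace {X : Type*} [NormedAddCommGroup X] [NormedSpace ℂ X]
    (Y : Submodule ℂ X) : Prop :=
  IsClosed (Y : Set X) ∧ ¬FiniteDimensional ℂ Y ∧ ¬FiniteDimensional ℂ (X ⧸ Y)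

/-- `T` admits an almost-invariant halfspace of defect at most 1. -/
def HasAIHS1 {X : Type*} [NormedAddCommGroup X] [NormedSpace ℂ X]
    (T : X →L[ℂ] X) : Prop :=
  ∃ Y : Submodule ℂ X, IsHalfspace Y ∧
    ∃ E : Submodule ℂ X, FiniteDimensional ℂ E ∧ Module.finrank ℂ E ≤ 1 ∧
      ∀ y ∈ Y, T y ∈ Y ⊔ E

open Submodule Set Polynomial

section Aux

variable {X : Type*} [NormedAddCommGroup X] [NormedSpace ℂ X]

/-- An infinite linearly independent family precludes finite-dimensionality. -/
lemma aux_not_fd_of_li {M : Type*} [AddCommGroup M] [Module ℂ M] (v : ℕ → M)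
    (hv : LinearIndependent ℂ v) : ¬FiniteDimensional ℂ M := by
  intro hfd
  set r := Module.finrank ℂ M with hr
  have h2 : LinearIndependent ℂ (fun i : Fin (r + 1) => v (i : ℕ)) :=
    hv.comp _ Fin.val_injective
  have := h2.fintype_card_le_finrank
  rw [Fintype.card_fin] at this
  omega

/-- A family with a biorthogonal family of functionals is linearly independent. -/
lemma aux_li_of_dual {M : Type*} [AddCommGroup M] [Module ℂ M] (v : ℕ → M)
    (g : ℕ → M →ₗ[ℂ] ℂ) (h : ∀ i j, g i (v j) = if i = j then 1 else 0) :
    LinearIndependent ℂ v := by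
  rw [linearIndependent_iff]
  intro l hl
  ext i
  have h1 := congrArg (g i) hl
  rw [map_zero, Finsupp.apply_linearCombination] at h1
  rw [Finsupp.linearCombination_apply, Finsupp.sum] at h1
  simp only [Function.comp_apply, smul_eq_mul] at h1
  rw [Finset.sum_congr rfl (fun j hj => by rw [h i j])] at h1
  by_cases hi : i ∈ l.support
  · rw [Finset.sum_eq_single i (fun b _ hb => by simp [Ne.symm hb]) (fun h' => (h' hi).elim)] at h1
    simpa using h1
  · simpa using Finsupp.notMem_support_iff.mp hi

/-- Separate a point from a finite-dimensional subspace by a continuous functional. -/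
lemma aux_sep {S : Submodule ℂ X} [FiniteDimensional ℂ S] {x : X} (hx : x ∉ S) :
    ∃ g : X →L[ℂ] ℂ, g x = 1 ∧ ∀ y ∈ S, g y = 0 := by
  -- functional on the quotient
  have hx0 : S.mkQ x ≠ 0 := by
    simpa [Submodule.Quotient.mk_eq_zero] using hx
  set f0 : Submodule.span ℂ {S.mkQ x} →ₗ[ℂ] ℂ :=
    (LinearPMap.mkSpanSingleton (S.mkQ x) (1 : ℂ) hx0).toFun with hf0
  obtain ⟨ψ, hψ⟩ := f0.exists_extend
  set ℓ : X →ₗ[ℂ] ℂ := ψ.comp S.mkQ with hℓ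
  have hℓx : ℓ x = 1 := by
    have : ψ (S.mkQ x) = f0 ⟨S.mkQ x, Submodule.mem_span_singleton_self _⟩ := by
      have := congrArg (fun t => t ⟨S.mkQ x, Submodule.mem_span_singleton_self _⟩) hψ
      exact this
    simp only [hℓ, LinearMap.comp_apply, this, hf0]
    exact LinearPMap.mkSpanSingleton_apply ℂ ℂ hx0 _
  have hℓS : ∀ y ∈ S, ℓ y = 0 := by
    intro y hy
    simp [hℓ, (Submodule.Quotient.mk_eq_zero S).mpr hy]
  -- restrict to a finite-dimensional subspace and extend continuously
  set W : Submodule ℂ X := S ⊔ Submodule.span ℂ {x} with hW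
  haveI : FiniteDimensional ℂ W := Submodule.finiteDimensional_sup _ _
  set fW : W →L[ℂ] ℂ := LinearMap.toContinuousLinearMap (ℓ.comp W.subtype) with hfW
  obtain ⟨g, hg, -⟩ := exists_extension_norm_eq (W : Subspace ℂ X) fW
  have hxW : x ∈ W := le_sup_right (a := S) (Submodule.mem_span_singleton_self x)
  refine ⟨g, ?_, ?_⟩
  · have := hg ⟨x, hxW⟩
    simpa [hfW, hℓx] using this
  · intro y hy
    have hyW : y ∈ W := le_sup_left (b := Submodule.span ℂ {x}) hy
    have := hg ⟨y, hyW⟩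
    simpa [hfW, hℓS y hy] using this

/-- In an infinite-dimensional subspace one can find a biorthogonal system. -/
lemma aux_biorth {N : Submodule ℂ X} (hN : ¬FiniteDimensional ℂ N) :
    ∃ (x : ℕ → X) (g : ℕ → X →L[ℂ] ℂ), (∀ n, x n ∈ N) ∧
      ∀ i j, g i (x j) = if i = j then 1 else 0 := by
  classical
  let Good : ∀ n, (Fin n → X × (X →L[ℂ] ℂ)) → Prop := fun n c =>
    (∀ a, (c a).1 ∈ N) ∧ ∀ a b, (c a).2 (c b).1 = if a = b then (1:ℂ) else 0
  have hstep : ∀ n (c : Fin n → X × (X →L[ℂ] ℂ)), Good n c →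
      ∃ p, Good (n+1) (Fin.snoc c p) := by
    intro n c hc
    set v : Fin n → X := fun a => (c a).1 with hv
    set S : Submodule ℂ X := Submodule.span ℂ (Set.range v) with hS
    haveI : FiniteDimensional ℂ S := FiniteDimensional.span_of_finite ℂ (finite_range v)
    have hNS : ¬(N ≤ S) := fun h => hN (Submodule.finiteDimensional_of_le h)
    obtain ⟨x0, hx0N, hx0S⟩ := SetLike.not_le_iff_exists.mp hNS
    set x' : X := x0 - ∑ a, ((c a).2 x0) • v a with hx'
    have hsumS : (∑ a, ((c a).2 x0) • v a) ∈ S :=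
      Submodule.sum_mem _ fun a _ => S.smul_mem _ (Submodule.subset_span (mem_range_self a))
    have hx'N : x' ∈ N := N.sub_mem hx0N
      (Submodule.sum_mem _ fun a _ => N.smul_mem _ (hc.1 a))
    have hx'S : x' ∉ S := by
      intro h
      apply hx0S
      have := S.add_mem h hsumS
      simpa [hx'] using this
    have hcx' : ∀ a, (c a).2 x' = 0 := by
      intro a
      rw [hx', map_sub, map_sum]
      have : ∀ b, (c b).2 x0 • (c a).2 (v b) = if a = b then (c a).2 x0 else 0 := by
        intro b
        rw [hv]
        rw [hc.2 a b]
        by_cases hab : a = b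
        · simp [hab]
        · simp [hab]
      rw [Finset.sum_congr rfl (fun b _ => by rw [map_smul, this b])]
      simp
    obtain ⟨g, hg1, hg0⟩ := aux_sep hx'S
    refine ⟨(x', g), ?_, ?_⟩
    · intro a
      refine Fin.lastCases ?_ ?_ a
      · simpa using hx'N
      · intro i; simpa using hc.1 i
    · intro a b
      refine Fin.lastCases ?_ ?_ a
      · refine Fin.lastCases ?_ ?_ b
        · simpa using hg1
        · intro j
          have hne : Fin.last n ≠ Fin.castSucc j := (Fin.castSucc_lt_last j).ne'
          simp only [Fin.snoc_last, Fin.snoc_castSucc, if_neg hne]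
          exact hg0 _ (Submodule.subset_span (mem_range_self j))
      · intro i
        refine Fin.lastCases ?_ ?_ b
        · have hne : Fin.castSucc i ≠ Fin.last n := (Fin.castSucc_lt_last i).ne
          simp only [Fin.snoc_last, Fin.snoc_castSucc, if_neg hne]
          exact hcx' i
        · intro j
          have : (Fin.castSucc i = Fin.castSucc j) ↔ i = j := Fin.castSucc_inj
          simp only [Fin.snoc_castSucc]
          rw [hc.2 i j]
          by_cases hij : i = j
          · simp [hij]
          · rw [if_neg hij, if_neg (fun h => hij (this.mp h))]
  let seq : ∀ n, {c : Fin n → X × (X →L[ℂ] ℂ) // Good n c} := fun n =>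
    Nat.rec ⟨Fin.elim0, ⟨fun a => a.elim0, fun a => a.elim0⟩⟩
      (fun m p => ⟨Fin.snoc p.1 (hstep m p.1 p.2).choose, (hstep m p.1 p.2).choose_spec⟩) n
  have hseq : ∀ m, (seq (m+1)).1 =
      Fin.snoc (seq m).1 (hstep m (seq m).1 (seq m).2).choose := fun m => rfl
  have key : ∀ m (i : Fin m), (seq m).1 i = (seq ((i:ℕ)+1)).1 (Fin.last i) := by
    intro m
    induction m with
    | zero => exact fun i => i.elim0
    | succ m ih =>
      intro i
      refine Fin.lastCases ?_ ?_ i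
      · simp [Fin.last]
      · intro j
        rw [hseq m, Fin.snoc_castSucc]
        simpa using ih j
  refine ⟨fun k => ((seq (k+1)).1 (Fin.last k)).1, fun k => ((seq (k+1)).1 (Fin.last k)).2,
    fun k => (seq (k+1)).2.1 (Fin.last k), ?_⟩
  intro i j
  set m : ℕ := max i j + 1 with hm
  have hi : i < m := by omega
  have hj : j < m := by omega
  have h2 := (seq m).2.2 ⟨i, hi⟩ ⟨j, hj⟩
  rw [key m ⟨i, hi⟩, key m ⟨j, hj⟩] at h2
  simp only at h2
  rw [h2]
  by_cases hij : i = j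
  · subst hij; simp
  · rw [if_neg hij, if_neg (by simp [Fin.ext_iff]; exact hij)]

/-- An infinite-dimensional eigenspace yields an invariant halfspace. -/
lemma aux_aihs_of_eigenspace (T : X →L[ℂ] X) {μ : ℂ}
    (hN : ¬FiniteDimensional ℂ (Module.End.eigenspace (T : X →ₗ[ℂ] X) μ)) :
    HasAIHS1 T := by
  classical
  set N : Submodule ℂ X := Module.End.eigenspace (T : X →ₗ[ℂ] X) μ with hNdef
  have hNset : (N : Set X) = {z : X | T z = μ • z} := by
    ext z
    simp [hNdef, Module.End.mem_eigenspace_iff]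
  have hNclosed : IsClosed (N : Set X) := by
    rw [hNset]
    exact isClosed_eq T.continuous (continuous_id.const_smul μ)
  obtain ⟨x, g, hxN, hbio⟩ := aux_biorth hN
  set Y : Submodule ℂ X :=
    (Submodule.span ℂ (Set.range fun k : ℕ => x (2*k))).topologicalClosure with hY
  have hYN : Y ≤ N := by
    apply Submodule.topologicalClosure_minimal
    · rw [Submodule.span_le]
      rintro - ⟨k, rfl⟩
      exact hxN (2*k)
    · exact hNclosed
  have hxY : ∀ k, x (2*k) ∈ Y := fun k =>
    (Submodule.le_topologicalClosure _) (Submodule.subset_span (mem_range_self k))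
  refine ⟨Y, ⟨Submodule.isClosed_topologicalClosure _, ?_, ?_⟩,
    ⊥, inferInstance, by simp, ?_⟩
  · -- Y infinite-dimensional
    apply aux_not_fd_of_li (fun k => (⟨x (2*k), hxY k⟩ : Y))
    apply LinearIndependent.of_comp Y.subtype
    apply aux_li_of_dual (fun k => x (2*k)) (fun i => (g (2*i) : X →ₗ[ℂ] ℂ))
    intro i j
    simp only [ContinuousLinearMap.coe_coe]
    rw [hbio (2*i) (2*j)]
    by_cases hij : i = j
    · simp [hij]
    · rw [if_neg (by omega), if_neg hij]
  · -- X ⧸ Y infinite-dimensional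
    have hker : ∀ k, Y ≤ LinearMap.ker ((g (2*k+1) : X →ₗ[ℂ] ℂ)) := by
      intro k
      apply Submodule.topologicalClosure_minimal
      · rw [Submodule.span_le]
        rintro - ⟨j, rfl⟩
        simp only [SetLike.mem_coe, LinearMap.mem_ker, ContinuousLinearMap.coe_coe]
        rw [hbio (2*k+1) (2*j), if_neg (by omega)]
      · have : (LinearMap.ker ((g (2*k+1) : X →ₗ[ℂ] ℂ)) : Set X)
            = (g (2*k+1)) ⁻¹' {0} := by
          ext z; simp
        rw [this]
        exact IsClosed.preimage (g (2*k+1)).continuous isClosed_singleton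
    apply aux_not_fd_of_li (fun k => Y.mkQ (x (2*k+1)))
    apply aux_li_of_dual _ (fun k => Y.liftQ ((g (2*k+1) : X →ₗ[ℂ] ℂ)) (hker k))
    intro i j
    rw [Submodule.mkQ_apply, Submodule.liftQ_apply]
    simp only [ContinuousLinearMap.coe_coe]
    rw [hbio (2*i+1) (2*j+1)]
    by_cases hij : i = j
    · simp [hij]
    · rw [if_neg (by omega), if_neg hij]
  · -- invariance
    intro y hy
    have hyN : y ∈ N := hYN hy
    have : T y = μ • y := by
      rw [hNdef, Module.End.mem_eigenspace_iff] at hyN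
      exact hyN
    rw [this, sup_bot_eq]
    exact Y.smul_mem μ hy

/-- Biorthogonal continuous functionals for a finite independent family. -/
lemma aux_dualfin {m : ℕ} {v : Fin m → X} (hv : LinearIndependent ℂ v) :
    ∃ g : Fin m → (X →L[ℂ] ℂ), ∀ i j, g i (v j) = if i = j then 1 else 0 := by
  classical
  have hsep : ∀ i : Fin m, ∃ g : X →L[ℂ] ℂ, g (v i) = 1 ∧
      ∀ y ∈ Submodule.span ℂ (v '' {i}ᶜ), g y = 0 := by
    intro i
    haveI : FiniteDimensional ℂ (Submodule.span ℂ (v '' {i}ᶜ)) :=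
      FiniteDimensional.span_of_finite ℂ ((Set.toFinite _).image v)
    exact aux_sep (hv.notMem_span_image (by simp))
  choose g hg1 hg0 using hsep
  refine ⟨g, fun i j => ?_⟩
  by_cases hij : i = j
  · subst hij; simp [hg1]
  · rw [if_neg hij]
    exact hg0 i _ (Submodule.subset_span ⟨j, by simp [Ne.symm hij], rfl⟩)

/-- If dependence of the first n+1 orbit vectors holds on a ball, it holds everywhere. -/
lemma aux_ball_dep (T : X →L[ℂ] X) {n : ℕ} {x0 : X} {ε : ℝ} (hε : 0 < ε)
    (hball : ∀ z ∈ Metric.ball x0 ε,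
      ¬LinearIndependent ℂ (fun i : Fin (n+1) => (T^(i:ℕ)) z)) :
    ∀ y : X, ¬LinearIndependent ℂ (fun i : Fin (n+1) => (T^(i:ℕ)) y) := by
  classical
  intro y hy
  obtain ⟨g, hg⟩ := aux_dualfin hy
  set A : Matrix (Fin (n+1)) (Fin (n+1)) ℂ := fun i j => g j ((T^(i:ℕ)) x0) with hA
  set c0 : ℝ := ε / (‖y‖ + 1) with hc0
  have hc0pos : 0 < c0 := div_pos hε (by positivity)
  set u : ℕ → ℂ := fun k => ((c0 / (k+2) : ℝ) : ℂ) with hu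
  set P : Polynomial ℂ := Matrix.charpoly (-A) with hP
  have hroot : ∀ k : ℕ, P.IsRoot (u k) := by
    intro k
    have hkpos : (0:ℝ) < (k:ℝ) + 2 := by positivity
    set z : X := x0 + (u k) • y with hz
    have hzball : z ∈ Metric.ball x0 ε := by
      rw [Metric.mem_ball, dist_eq_norm, hz, add_sub_cancel_left, norm_smul]
      have h1 : ‖u k‖ = c0 / (k+2) := by
        rw [hu]
        rw [Complex.norm_real, Real.norm_eq_abs, abs_of_pos (div_pos hc0pos hkpos)]
      rw [h1]
      calc c0 / (k+2) * ‖y‖ ≤ c0 * ‖y‖ := by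
            apply mul_le_mul_of_nonneg_right _ (norm_nonneg y)
            apply div_le_self hc0pos.le (by linarith)
        _ < c0 * (‖y‖ + 1) := by
            apply mul_lt_mul_of_pos_left _ hc0pos
            linarith
        _ = ε := by
            rw [hc0]
            field_simp
    obtain ⟨cdep, hsum, i0, hi0⟩ := Fintype.not_linearIndependent_iff.mp (hball z hzball)
    set M : Matrix (Fin (n+1)) (Fin (n+1)) ℂ := A + (u k) • 1 with hM
    have hMij : ∀ i j, M i j = g j ((T^(i:ℕ)) z) := by
      intro i j
      rw [hz]
      simp only [map_add, map_smul]
      rw [hg j i]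
      simp only [hM, Matrix.add_apply, Matrix.smul_apply, Matrix.one_apply, hA]
      by_cases hij : i = j
      · subst hij
        change (g i) ((T ^ (i:ℕ)) x0) + (u k • (1 : Matrix (Fin (n+1)) (Fin (n+1)) ℂ)) i i = _
        simp
      · change (g j) ((T ^ (i:ℕ)) x0) + (u k • (1 : Matrix (Fin (n+1)) (Fin (n+1)) ℂ)) i j = _
        simp [hij, Ne.symm hij]
    have hdet : M.det = 0 := by
      rw [← Matrix.exists_vecMul_eq_zero_iff]
      refine ⟨cdep, fun h => hi0 (congrFun h i0), ?_⟩
      funext j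
      rw [Matrix.vecMul, dotProduct]
      simp only [Pi.zero_apply]
      have : ∀ i, cdep i * M i j = g j (cdep i • ((T^(i:ℕ)) z)) := by
        intro i
        rw [hMij i j, map_smul, smul_eq_mul]
      rw [Finset.sum_congr rfl fun i _ => this i, ← map_sum, hsum, map_zero]
    have hMP : P.eval (u k) = M.det := by
      rw [hP, Matrix.charpoly, ← Polynomial.coe_evalRingHom, RingHom.map_det]
      congr 1
      rw [RingHom.mapMatrix_apply]
      funext i j
      by_cases hij : i = j
      · subst hij
        rw [Matrix.map_apply, Matrix.charmatrix_apply_eq]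
        simp only [coe_evalRingHom, Polynomial.eval_sub, Polynomial.eval_X,
          Polynomial.eval_C, Matrix.neg_apply, sub_neg_eq_add, hM, Matrix.add_apply,
          Matrix.smul_apply, Matrix.one_apply_eq, smul_eq_mul, mul_one]
        ring
      · rw [Matrix.map_apply, Matrix.charmatrix_apply_ne _ _ _ hij]
        simp only [coe_evalRingHom, Polynomial.eval_neg, Polynomial.eval_C,
          Matrix.neg_apply, neg_neg, hM, Matrix.add_apply, Matrix.smul_apply,
          Matrix.one_apply, if_neg hij, smul_eq_mul, mul_zero, add_zero]
    exact by rw [Polynomial.IsRoot, hMP, hdet]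
  have huinj : Function.Injective u := by
    intro k k' hkk'
    rw [hu] at hkk'
    simp only [Complex.ofReal_inj] at hkk'
    have h2 : ((k:ℝ)+2) ≠ 0 := by positivity
    have h3 : ((k':ℝ)+2) ≠ 0 := by positivity
    rw [div_eq_div_iff h2 h3] at hkk'
    have h5 := mul_left_cancel₀ (ne_of_gt hc0pos) hkk'
    have h6 : (k:ℝ) = (k':ℝ) := by linarith
    exact_mod_cast h6
  have hinf : {t : ℂ | P.IsRoot t}.Infinite :=
    Set.infinite_of_injective_forall_mem huinj hroot
  exact (Matrix.charpoly_monic (-A)).ne_zero (P.eq_zero_of_infinite_isRoot hinf)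

lemma aux_exists_n [CompleteSpace X] (T : X →L[ℂ] X)
    (hall : ∀ e : X, FiniteDimensional ℂ
      ((Submodule.span ℂ (Set.range fun n : ℕ => (T ^ n) e)).topologicalClosure)) :
    ∃ n : ℕ, ∀ y : X, ¬LinearIndependent ℂ (fun i : Fin (n+1) => (T^(i:ℕ)) y) := by
  classical
  set C : ℕ → Set X := fun n =>
    {z | ¬LinearIndependent ℂ (fun i : Fin (n+1) => (T^(i:ℕ)) z)} with hC
  have hCclosed : ∀ n, IsClosed (C n) := by
    intro n
    have hcont : Continuous (fun z : X => fun i : Fin (n+1) => (T^(i:ℕ)) z) :=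
      continuous_pi fun i => (T^(i:ℕ)).continuous
    have : C n = (fun z : X => fun i : Fin (n+1) => (T^(i:ℕ)) z) ⁻¹'
        {v : Fin (n+1) → X | LinearIndependent ℂ v}ᶜ := rfl
    rw [this]
    exact (isOpen_setOf_linearIndependent.isClosed_compl).preimage hcont
  have hcover : (⋃ n, C n) = univ := by
    rw [Set.eq_univ_iff_forall]
    intro z
    rw [Set.mem_iUnion]
    set V := (Submodule.span ℂ (Set.range fun n : ℕ => (T ^ n) z)).topologicalClosure with hV
    haveI : FiniteDimensional ℂ V := hall z
    refine ⟨Module.finrank ℂ V, fun hLI => ?_⟩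
    have hmem : ∀ i : ℕ, (T^i) z ∈ V := fun i =>
      (Submodule.le_topologicalClosure _) (Submodule.subset_span (mem_range_self i))
    set n := Module.finrank ℂ V with hn
    have hLIV : LinearIndependent ℂ (fun i : Fin (n+1) => (⟨(T^(i:ℕ)) z, hmem i⟩ : V)) := by
      apply LinearIndependent.of_comp V.subtype
      exact hLI
    have := hLIV.fintype_card_le_finrank
    rw [Fintype.card_fin] at this
    omega
  obtain ⟨n, x0, hx0⟩ := nonempty_interior_of_iUnion_of_closed hCclosed hcover
  rw [mem_interior_iff_mem_nhds, Metric.mem_nhds_iff] at hx0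
  obtain ⟨ε, hε, hball⟩ := hx0
  exact ⟨n, aux_ball_dep T hε (fun z hz => hball hz)⟩

lemma aux_fd_comap {φ : X →ₗ[ℂ] X} {p : Submodule ℂ X}
    (hp : FiniteDimensional ℂ p) (hk : FiniteDimensional ℂ (LinearMap.ker φ)) :
    FiniteDimensional ℂ (Submodule.comap φ p) := by
  set W := Submodule.comap φ p with hW
  set ψ : W →ₗ[ℂ] p := (φ.domRestrict W).codRestrict p (fun w => w.2) with hψ
  have hrank := LinearMap.rank_range_add_rank_ker ψ
  have h1 : Module.rank ℂ (LinearMap.range ψ) < Cardinal.aleph0 :=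
    lt_of_le_of_lt (Submodule.rank_le _) (Module.rank_lt_aleph0 ℂ p)
  have h2 : Module.rank ℂ (LinearMap.ker ψ) < Cardinal.aleph0 := by
    have hle : Submodule.map W.subtype (LinearMap.ker ψ) ≤ LinearMap.ker φ := by
      rintro - ⟨w, hw, rfl⟩
      have : ψ w = 0 := hw
      have h3 : φ (W.subtype w) = 0 := congrArg (Subtype.val) this
      exact h3
    have heq := (Submodule.equivMapOfInjective W.subtype
      (Submodule.injective_subtype W) (LinearMap.ker ψ)).rank_eq
    rw [heq]
    exact lt_of_le_of_lt (Submodule.rank_mono hle) (Module.rank_lt_aleph0 ℂ _)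
  have : Module.rank ℂ W < Cardinal.aleph0 := by
    rw [← hrank]
    exact Cardinal.add_lt_aleph0 h1 h2
  exact Module.rank_lt_aleph0_iff.mp this

lemma aux_fd_ker_pow (φ : X →ₗ[ℂ] X) (hφ : FiniteDimensional ℂ (LinearMap.ker φ)) :
    ∀ m : ℕ, FiniteDimensional ℂ (LinearMap.ker (φ^m)) := by
  intro m
  induction m with
  | zero =>
    rw [pow_zero, Module.End.one_eq_id, LinearMap.ker_id]
    exact Module.Finite.bot ℂ X
  | succ m ih =>
    rw [pow_succ, Module.End.mul_eq_comp, LinearMap.ker_comp]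
    exact aux_fd_comap ih hφ

lemma aux_ker_pow_bot (φ : X →ₗ[ℂ] X) (hφ : LinearMap.ker φ = ⊥) (m : ℕ) :
    LinearMap.ker (φ^m) = ⊥ := by
  induction m with
  | zero => rw [pow_zero, Module.End.one_eq_id, LinearMap.ker_id]
  | succ k ih =>
    rw [pow_succ, Module.End.mul_eq_comp, LinearMap.ker_comp, ih, Submodule.comap_bot, hφ]

lemma aux_eigen_infdim [CompleteSpace X] (hX : ¬FiniteDimensional ℂ X) (T : X →L[ℂ] X)
    (hall : ∀ e : X, FiniteDimensional ℂ
      ((Submodule.span ℂ (Set.range fun n : ℕ => (T ^ n) e)).topologicalClosure)) :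
    ∃ μ : ℂ, ¬FiniteDimensional ℂ (Module.End.eigenspace (T : X →ₗ[ℂ] X) μ) := by
  classical
  obtain ⟨n, hCn⟩ := aux_exists_n T hall
  set f : Module.End ℂ X := (T : X →ₗ[ℂ] X) with hf
  have hpow : ∀ (k : ℕ) (z : X), (f^k) z = (T^k) z := by
    intro k z
    rw [Module.End.pow_apply, ContinuousLinearMap.coe_pow']
    rfl
  by_contra hcon
  push_neg at hcon
  -- all eigenspaces finite-dimensional
  have hEig : ∀ μ : ℂ, Module.End.eigenspace f μ
      = LinearMap.ker (f - μ • (1 : Module.End ℂ X)) := by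
    intro μ
    ext z
    simp [Module.End.mem_eigenspace_iff, sub_eq_zero]
  have hkerfd : ∀ μ : ℂ, FiniteDimensional ℂ (LinearMap.ker (f - μ • (1 : Module.End ℂ X))) := by
    intro μ; rw [← hEig]; exact hcon μ
  -- the set of eigenvalues is finite
  have hΛ : {μ : ℂ | f.HasEigenvalue μ}.Finite := by
    by_contra hinf
    obtain ⟨s, hsub, hcard⟩ := Set.Infinite.exists_subset_card_eq hinf (n+2)
    have hvex : ∀ μ : {μ // μ ∈ s}, ∃ w, f.HasEigenvector (μ : ℂ) w :=
      fun μ => (hsub μ.2).exists_hasEigenvector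
    choose v hv using hvex
    have hLIv : LinearIndependent ℂ v :=
      f.eigenvectors_linearIndependent' (fun μ : {μ // μ ∈ s} => (μ : ℂ))
        Subtype.coe_injective v hv
    set y : X := ∑ μ : {μ // μ ∈ s}, v μ with hy
    obtain ⟨cdep, hsum, i0, hi0⟩ := Fintype.not_linearIndependent_iff.mp (hCn y)
    have hTiy : ∀ i : ℕ, (T^i) y = ∑ μ : {μ // μ ∈ s}, ((μ : ℂ)^i) • v μ := by
      intro i
      rw [← hpow i y, hy, map_sum]
      exact Finset.sum_congr rfl fun μ _ => (hv μ).pow_apply i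
    have hsum2 : ∑ μ : {μ // μ ∈ s}, (∑ i : Fin (n+1), cdep i * ((μ : ℂ))^(i:ℕ)) • v μ = 0 := by
      rw [← hsum]
      rw [Finset.sum_congr rfl fun (i : Fin (n+1)) _ => by rw [hTiy (i:ℕ), Finset.smul_sum]]
      rw [Finset.sum_comm]
      exact Finset.sum_congr rfl fun μ _ => by
        rw [Finset.sum_smul]
        exact Finset.sum_congr rfl fun i _ => by rw [smul_smul]
    have hcoef : ∀ μ : {μ // μ ∈ s}, ∑ i : Fin (n+1), cdep i * ((μ : ℂ))^(i:ℕ) = 0 := by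
      have := Fintype.linearIndependent_iff.mp hLIv
        (fun μ => ∑ i : Fin (n+1), cdep i * ((μ : ℂ))^(i:ℕ)) hsum2
      exact this
    set q : Polynomial ℂ := ∑ i : Fin (n+1), Polynomial.monomial (i:ℕ) (cdep i) with hq
    have hq0 : q ≠ 0 := by
      intro h0
      apply hi0
      have : q.coeff (i0:ℕ) = cdep i0 := by
        rw [hq, Polynomial.finset_sum_coeff]
        rw [Finset.sum_eq_single i0]
        · rw [Polynomial.coeff_monomial, if_pos rfl]
        · intro b _ hb
          rw [Polynomial.coeff_monomial, if_neg (fun h => hb (Fin.val_injective h))]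
        · intro h; exact absurd (Finset.mem_univ i0) h
      rw [h0, Polynomial.coeff_zero] at this
      exact this.symm
    have hqdeg : q.natDegree ≤ n := by
      rw [hq]
      apply Polynomial.natDegree_sum_le_of_forall_le
      intro i _
      exact le_trans (Polynomial.natDegree_monomial_le _) (Fin.is_le i)
    have hroots : ∀ μ ∈ s, q.IsRoot μ := by
      intro μ hμ
      have := hcoef ⟨μ, hμ⟩
      rw [Polynomial.IsRoot, hq, Polynomial.eval_finset_sum]
      simpa [Polynomial.eval_monomial] using this
    have hsubroots : s ⊆ q.roots.toFinset := by
      intro μ hμ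
      rw [Multiset.mem_toFinset, Polynomial.mem_roots hq0]
      exact hroots μ hμ
    have hcard2 := Finset.card_le_card hsubroots
    have hcard3 := Multiset.toFinset_card_le q.roots
    have hcard4 := q.card_roots' 
    omega
  -- the union of kernels of powers covers X
  set D : ℕ → Submodule ℂ X := fun m =>
    ⨆ μ : ℂ, LinearMap.ker ((f - μ • (1 : Module.End ℂ X))^m) with hD
  have hDmono : Monotone D := by
    intro m m' hmm'
    apply iSup_mono
    intro μ
    have : (f - μ • (1 : Module.End ℂ X))^m' =
        ((f - μ • (1 : Module.End ℂ X))^(m'-m)) * ((f - μ • (1 : Module.End ℂ X))^m) := by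
      rw [← pow_add]
      congr 1
      omega
    rw [this, Module.End.mul_eq_comp, LinearMap.ker_comp]
    intro z hz
    rw [Submodule.mem_comap]
    simp only [LinearMap.mem_ker] at hz ⊢
    rw [hz, map_zero]
  have hcoverD : ∀ z : X, ∃ m, z ∈ D m := by
    intro z
    set V := Submodule.span ℂ (Set.range fun k : ℕ => (T ^ k) z) with hV
    haveI : FiniteDimensional ℂ
        ((Submodule.span ℂ (Set.range fun k : ℕ => (T ^ k) z)).topologicalClosure) := hall z
    haveI : FiniteDimensional ℂ V :=
      Submodule.finiteDimensional_of_le (Submodule.le_topologicalClosure _)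
    have hTV : ∀ w ∈ V, f w ∈ V := by
      have hmap : Submodule.map f V ≤ V := by
        rw [hV, Submodule.map_span, Submodule.span_le]
        rintro - ⟨-, ⟨k, rfl⟩, rfl⟩
        apply Submodule.subset_span
        refine ⟨k+1, ?_⟩
        show (T^(k+1)) z = f ((T^k) z)
        rw [pow_succ']
        rfl
      intro w hw
      exact hmap ⟨w, hw, rfl⟩
    set g : Module.End ℂ V := f.restrict hTV with hg
    have htop := Module.End.iSup_maxGenEigenspace_eq_top g
    have hzV : z ∈ V := by
      apply Submodule.subset_span
      exact ⟨0, by show (T^0) z = z; rw [pow_zero]; rfl⟩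
    have hcomm : ∀ (μ : ℂ) (k : ℕ) (w : V),
        ((((g - μ • (1 : Module.End ℂ V))^k) w : X)) =
          ((f - μ • (1 : Module.End ℂ X))^k) (w : X) := by
      intro μ k
      induction k with
      | zero => intro w; simp
      | succ k ih =>
        intro w
        have hbase : (((g - μ • (1 : Module.End ℂ V)) w : X))
            = (f - μ • (1 : Module.End ℂ X)) (w : X) := by
          rfl
        rw [pow_succ, pow_succ]
        rw [Module.End.mul_apply]
        rw [Module.End.mul_apply]
        rw [← hbase]
        rw [ih]
    have hle : (⊤ : Submodule ℂ V) ≤ Submodule.comap V.subtype (⨆ m, D m) := by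
      rw [← htop]
      apply iSup_le
      intro μ
      intro w hw
      rw [Module.End.mem_maxGenEigenspace] at hw
      obtain ⟨k, hk⟩ := hw
      rw [Submodule.mem_comap]
      apply Submodule.mem_iSup_of_mem k
      rw [hD]
      apply Submodule.mem_iSup_of_mem μ
      rw [LinearMap.mem_ker, Submodule.subtype_apply, ← hcomm μ k w, hk]
      rfl
    have := hle (Submodule.mem_top (x := (⟨z, hzV⟩ : V)))
    rw [Submodule.mem_comap] at this
    obtain ⟨m, hm⟩ := (Submodule.mem_iSup_of_chain ⟨D, hDmono⟩ z).mp this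
    exact ⟨m, hm⟩
  -- each D m is finite-dimensional and closed
  have hDfd : ∀ m, FiniteDimensional ℂ (D m) := by
    intro m
    set FS : Submodule ℂ X := (hΛ.toFinset).sup
        (fun μ => LinearMap.ker ((f - μ • (1 : Module.End ℂ X))^m)) with hFS
    have hle : D m ≤ FS := by
      apply iSup_le
      intro μ
      by_cases hμ : f.HasEigenvalue μ
      · exact Finset.le_sup (f := fun μ => LinearMap.ker ((f - μ • (1 : Module.End ℂ X))^m))
          ((Set.Finite.mem_toFinset hΛ).mpr hμ)
      · have hbot : LinearMap.ker (f - μ • (1 : Module.End ℂ X)) = ⊥ := by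
          rw [← hEig]
          exact not_not.mp (fun h => hμ h)
        rw [aux_ker_pow_bot _ hbot m]
        exact bot_le
    haveI : ∀ μ : ℂ, FiniteDimensional ℂ
        (LinearMap.ker ((f - μ • (1 : Module.End ℂ X))^m)) :=
      fun μ => aux_fd_ker_pow _ (hkerfd μ) m
    haveI : FiniteDimensional ℂ FS := by
      rw [hFS]
      infer_instance
    exact Submodule.finiteDimensional_of_le hle
  -- Baire
  have hDclosed : ∀ m, IsClosed ((D m : Set X)) := by
    intro m
    haveI := hDfd m
    exact Submodule.closed_of_finiteDimensional (D m)
  have hcoverset : (⋃ m, (D m : Set X)) = univ := by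
    rw [Set.eq_univ_iff_forall]
    intro z
    obtain ⟨m, hm⟩ := hcoverD z
    exact Set.mem_iUnion.mpr ⟨m, hm⟩
  obtain ⟨m, x1, hx1⟩ := nonempty_interior_of_iUnion_of_closed hDclosed hcoverset
  haveI := NormedField.nhdsWithin_isUnit_neBot (α := ℂ)
  have htop : D m = ⊤ := Submodule.eq_top_of_nonempty_interior' _ ⟨x1, hx1⟩
  apply hX
  haveI := hDfd m
  have : FiniteDimensional ℂ (⊤ : Submodule ℂ X) := htop ▸ hDfd m
  exact Module.Finite.equiv (Submodule.topEquiv (R := ℂ) (M := X))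

end Aux

/-- If `T` fails to admit an AIHS of defect ≤ 1, then there exists a vector `e`
whose orbit `{T^n e}` has closed linear span of finite codimension. -/
theorem orbit_span_finite_codimensional_of_no_aihs
    {X : Type*} [NormedAddCommGroup X] [NormedSpace ℂ X] [CompleteSpace X]
    (hX : ¬FiniteDimensional ℂ X) (T : X →L[ℂ] X)
    (hno : ¬HasAIHS1 T) :
    ∃ e : X, FiniteDimensional ℂ
      (X ⧸ (Submodule.span ℂ (Set.range fun n : ℕ => (T ^ n) e)).topologicalClosure) := by
  by_contra hcon
  push_neg at hcon
  by_cases hall : ∀ e : X, FiniteDimensional ℂ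
      ((Submodule.span ℂ (Set.range fun n : ℕ => (T ^ n) e)).topologicalClosure)
  · obtain ⟨μ, hμ⟩ := aux_eigen_infdim hX T hall
    exact hno (aux_aihs_of_eigenspace T hμ)
  · push_neg at hall
    obtain ⟨e, he⟩ := hall
    set M : Submodule ℂ X := Submodule.span ℂ (Set.range fun n : ℕ => (T ^ n) e) with hM
    apply hno
    refine ⟨M.topologicalClosure,
      ⟨Submodule.isClosed_topologicalClosure _, he, hcon e⟩,
      ⊥, inferInstance, by simp, ?_⟩
    intro y hy
    rw [sup_bot_eq]
    have hmapM : ∀ z ∈ M, T z ∈ M := by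
      have : Submodule.map (T : X →ₗ[ℂ] X) M ≤ M := by
        rw [hM, Submodule.map_span, Submodule.span_le]
        rintro - ⟨-, ⟨k, rfl⟩, rfl⟩
        apply Submodule.subset_span
        refine ⟨k+1, ?_⟩
        show (T^(k+1)) e = (T : X →ₗ[ℂ] X) ((T^k) e)
        rw [pow_succ']
        rfl
      intro z hz
      exact this ⟨z, hz, rfl⟩
    have hy' : y ∈ closure (M : Set X) := by
      rw [← Submodule.topologicalClosure_coe]
      exact hy
    have h1 : T y ∈ closure (T '' (M : Set X)) :=
      image_closure_subset_closure_image T.continuous ⟨y, hy', rfl⟩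
    have h2 : closure (T '' (M : Set X)) ⊆ closure (M : Set X) := by
      apply closure_mono
      rintro - ⟨w, hw, rfl⟩
      exact hmapM w hw
    have h3 : T y ∈ closure (M : Set X) := h2 h1
    rw [← Submodule.topologicalClosure_coe] at h3
    exact h3
end

section
/- Let X be a complex Banach space and T ∈ L(X). Suppose the null space N(T) is complemented in X, say X = W ⊕ N(T) for a closed subspace W, and let P_W : X → W be the bounded linear projection onto W along N(T). Then the operator P_W T|_W ∈ L(W) satisfies σ_su(P_W T|_W) ⊆ σ_su(T) ⊆ σ_su(P_W T|_W) ∪ {0}. If moreover W ≠ {0} and σ_su(T) is connected, then σ_su(T) = σ_su(P_W T|_W). -/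
open Filter Topology ContinuousLinearMap

/-- The surjectivity spectrum of an operator: scalars `z` such that `z - A`
is not surjective. -/
def surjSpectrum {E : Type*} [NormedAddCommGroup E] [NormedSpace ℂ E]
    (A : E →L[ℂ] E) : Set ℂ :=
  {z : ℂ | ¬Function.Surjective fun x => z • x - A x}

/-- A small perturbation of a surjective operator is surjective. -/
lemma surj_perturb {E F : Type*} [NormedAddCommGroup E] [NormedSpace ℂ E]
    [NormedAddCommGroup F] [NormedSpace ℂ F] [CompleteSpace E]
    (f g : E →L[ℂ] F) (C : ℝ) (hC : 0 ≤ C)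
    (hf : ∀ y, ∃ x, f x = y ∧ ‖x‖ ≤ C * ‖y‖) (hg : ‖g‖ * C ≤ 1 / 2) :
    Function.Surjective (f + g) := by
  intro y
  set r : F → E := fun w => (hf w).choose with hr
  have hr1 : ∀ w, f (r w) = w := fun w => (hf w).choose_spec.1
  have hr2 : ∀ w, ‖r w‖ ≤ C * ‖w‖ := fun w => (hf w).choose_spec.2
  set u : ℕ → F := fun n => Nat.rec y (fun _ p => -g (r p)) n with hu
  have huS : ∀ n, u (n + 1) = -g (r (u n)) := fun n => rfl
  have hubound : ∀ n, ‖u n‖ ≤ (1 / 2) ^ n * ‖y‖ := by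
    intro n
    induction n with
    | zero =>
      have h0 : u 0 = y := rfl
      rw [h0, pow_zero, one_mul]
    | succ n ih =>
      have h1 : ‖u (n + 1)‖ ≤ ‖g‖ * (C * ‖u n‖) := by
        rw [huS n, norm_neg]
        calc ‖g (r (u n))‖ ≤ ‖g‖ * ‖r (u n)‖ := g.le_opNorm _
        _ ≤ ‖g‖ * (C * ‖u n‖) := by
            exact mul_le_mul_of_nonneg_left (hr2 _) (norm_nonneg g)
      have h2 : ‖g‖ * (C * ‖u n‖) ≤ (1 / 2) * ‖u n‖ := by
        rw [← mul_assoc]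
        exact mul_le_mul_of_nonneg_right hg (norm_nonneg _)
      calc ‖u (n + 1)‖ ≤ (1 / 2) * ‖u n‖ := h1.trans h2
      _ ≤ (1 / 2) * ((1 / 2) ^ n * ‖y‖) := by linarith
      _ = (1 / 2) ^ (n + 1) * ‖y‖ := by ring
  set x : ℕ → E := fun n => r (u n) with hx
  have hxbound : ∀ n, ‖x n‖ ≤ C * ‖y‖ * (1 / 2) ^ n := by
    intro n
    calc ‖x n‖ ≤ C * ‖u n‖ := hr2 _
    _ ≤ C * ((1 / 2) ^ n * ‖y‖) := mul_le_mul_of_nonneg_left (hubound n) hC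
    _ = C * ‖y‖ * (1 / 2) ^ n := by ring
  have hxsum : Summable x := by
    apply Summable.of_norm_bounded (Summable.mul_left (C * ‖y‖)
      (summable_geometric_of_lt_one (by norm_num) (by norm_num))) hxbound
  refine ⟨∑' n, x n, ?_⟩
  have hmap : HasSum (fun n => (f + g) (x n)) ((f + g) (∑' n, x n)) :=
    hxsum.hasSum.mapL (f + g)
  have hfun : (fun n => (f + g) (x n)) = fun n => u n - u (n + 1) := by
    funext n
    rw [huS n]
    simp only [add_apply, hx, hr1 (u n)]
    abel
  have hlim : Tendsto (fun n => u n) atTop (𝓝 0) := by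
    apply squeeze_zero_norm hubound
    simpa using (tendsto_pow_atTop_nhds_zero_of_lt_one (by norm_num : (0:ℝ) ≤ 1/2)
      (by norm_num)).mul_const ‖y‖
  have hsummable : Summable (fun n => u n - u (n + 1)) := by
    rw [← hfun]; exact hmap.summable
  have hsum2 : HasSum (fun n => u n - u (n + 1)) y := by
    rw [hsummable.hasSum_iff_tendsto_nat]
    have : ∀ n, ∑ i ∈ Finset.range n, (u i - u (i + 1)) = y - u n := by
      intro n
      rw [Finset.sum_range_sub' u n]
      have h0 : u 0 = y := rfl
      rw [h0]
    simp only [this]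
    simpa using tendsto_const_nhds.sub hlim
  have := hmap
  rw [hfun] at this
  exact (this.unique hsum2)

/-- The complement of the surjectivity spectrum is open. -/
lemma isOpen_compl_surjSpectrum {E : Type*} [NormedAddCommGroup E] [NormedSpace ℂ E]
    [CompleteSpace E] (A : E →L[ℂ] E) : IsOpen (surjSpectrum A)ᶜ := by
  rw [Metric.isOpen_iff]
  intro z₀ hz₀
  have hsurj : Function.Surjective fun x => z₀ • x - A x := by
    simpa [surjSpectrum] using hz₀
  set B₀ : E →L[ℂ] E := algebraMap ℂ (E →L[ℂ] E) z₀ - A with hB₀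
  have hB₀fun : ⇑B₀ = fun x => z₀ • x - A x := by
    funext x; simp [hB₀, Algebra.algebraMap_eq_smul_one]
  have hsurjB : Function.Surjective B₀ := by rw [hB₀fun]; exact hsurj
  obtain ⟨C, hCpos, hC⟩ := B₀.exists_preimage_norm_le hsurjB
  refine ⟨1 / (2 * C), by positivity, ?_⟩
  intro z hz
  rw [Metric.mem_ball, Complex.dist_eq] at hz
  simp only [Set.mem_compl_iff, surjSpectrum, Set.mem_setOf_eq, not_not]
  set g : E →L[ℂ] E := algebraMap ℂ (E →L[ℂ] E) (z - z₀) with hgdef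
  have hgn : ‖g‖ ≤ ‖z - z₀‖ := by
    have h1 : g = (z - z₀) • (1 : E →L[ℂ] E) := by
      rw [hgdef, Algebra.algebraMap_eq_smul_one]
    have h2 : ‖g‖ = ‖z - z₀‖ * ‖(1 : E →L[ℂ] E)‖ := by
      rw [hgdef, norm_algebraMap]
    have h3 : ‖(1 : E →L[ℂ] E)‖ ≤ 1 := norm_id_le
    have h4 := norm_nonneg (z - z₀)
    nlinarith
  have hzz : ‖z - z₀‖ < 1 / (2 * C) := by
    exact hz
  have hsmall : ‖g‖ * C ≤ 1 / 2 := by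
    have h1 : ‖z - z₀‖ * C ≤ (1 / (2 * C)) * C :=
      mul_le_mul_of_nonneg_right hzz.le hCpos.le
    have h2 : (1 / (2 * C)) * C = 1 / 2 := by field_simp
    have h3 : ‖g‖ * C ≤ ‖z - z₀‖ * C := mul_le_mul_of_nonneg_right hgn hCpos.le
    linarith
  have hsurj2 := surj_perturb B₀ g C hCpos.le hC hsmall
  have hfun : ⇑(B₀ + g) = fun x => z • x - A x := by
    funext x
    simp only [ContinuousLinearMap.add_apply, hB₀fun, hgdef,
      Algebra.algebraMap_eq_smul_one, ContinuousLinearMap.smul_apply,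
      ContinuousLinearMap.one_apply]
    module
  rwa [hfun] at hsurj2

/-- The surjectivity spectrum of an operator on a nontrivial complex Banach space
is nonempty. -/
lemma surjSpectrum_nonempty {E : Type*} [NormedAddCommGroup E] [NormedSpace ℂ E]
    [CompleteSpace E] [Nontrivial E] (A : E →L[ℂ] E) : (surjSpectrum A).Nonempty := by
  by_contra hempty
  rw [Set.not_nonempty_iff_eq_empty] at hempty
  have hsurj : ∀ z : ℂ, Function.Surjective fun x => z • x - A x := by
    intro z
    by_contra hz
    have : z ∈ surjSpectrum A := hz
    rw [hempty] at this
    exact this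
  -- the spectrum of A is nonempty, closed, bounded
  have hne : (spectrum ℂ A).Nonempty := spectrum.nonempty A
  have hclosed : IsClosed (spectrum ℂ A) := spectrum.isClosed A
  have hproper : spectrum ℂ A ≠ Set.univ := by
    intro h
    have : ((‖A‖ + 1 : ℝ) : ℂ) ∈ spectrum ℂ A := h ▸ Set.mem_univ _
    have hlt : ‖A‖ < ‖((‖A‖ + 1 : ℝ) : ℂ)‖ := by
      rw [Complex.norm_real]
      have := norm_nonneg A
      rw [Real.norm_eq_abs, abs_of_nonneg (by linarith)]
      linarith
    rw [spectrum.mem_iff] at this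
    exact this (spectrum.mem_resolventSet_iff.1 (spectrum.mem_resolventSet_of_norm_lt hlt))
  have hfr : (frontier (spectrum ℂ A)).Nonempty := by
    by_contra hf
    rw [Set.not_nonempty_iff_eq_empty] at hf
    rcases isClopen_iff.1 (isClopen_iff_frontier_eq_empty.2 hf) with h | h
    · exact hne.ne_empty h
    · exact hproper h
  obtain ⟨lam, hlam⟩ := hfr
  have hlam_mem : lam ∈ spectrum ℂ A := hclosed.frontier_subset hlam
  have hlam_cl : lam ∈ closure (spectrum ℂ A)ᶜ := by
    rw [frontier_eq_closure_inter_closure] at hlam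
    exact hlam.2
  -- open mapping constant for lam - A
  set B : E →L[ℂ] E := algebraMap ℂ (E →L[ℂ] E) lam - A with hBdef
  have hBfun : ⇑B = fun x => lam • x - A x := by
    funext x
    simp [hBdef, Algebra.algebraMap_eq_smul_one]
  have hsurjB : Function.Surjective B := by rw [hBfun]; exact hsurj lam
  obtain ⟨C, hCpos, hC⟩ := B.exists_preimage_norm_le hsurjB
  obtain ⟨lam', hlam', hdist⟩ := Metric.mem_closure_iff.1 hlam_cl (1 / (4 * C)) (by positivity)
  rw [Set.mem_compl_iff] at hlam' 
  set d : ℂ := lam' - lam with hd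
  rw [Complex.dist_eq] at hdist
  have hdn : ‖d‖ < 1 / (4 * C) := by
    rw [hd, norm_sub_rev]; exact hdist
  -- lam' is in the resolvent set
  have hunit : IsUnit (algebraMap ℂ (E →L[ℂ] E) lam' - A) := spectrum.notMem_iff.1 hlam'
  obtain ⟨v, hv⟩ := id hunit
  set R : E →L[ℂ] E := ↑v⁻¹ with hR
  have hRB : R * (algebraMap ℂ (E →L[ℂ] E) lam' - A) = 1 := by rw [hR, ← hv]; exact v.inv_mul
  have hBR : (algebraMap ℂ (E →L[ℂ] E) lam' - A) * R = 1 := by rw [hR, ← hv]; exact v.mul_inv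
  have hB' : algebraMap ℂ (E →L[ℂ] E) lam' - A = B + d • 1 := by
    rw [hBdef, hd]
    rw [Algebra.algebraMap_eq_smul_one, Algebra.algebraMap_eq_smul_one, sub_smul]
    abel
  -- bound on R
  have hRptbound : ∀ y : E, ‖R y‖ ≤ (C + ‖d‖ * ‖R‖ * C) * ‖y‖ := by
    intro y
    obtain ⟨x, hx1, hx2⟩ := hC y
    have h1 : (algebraMap ℂ (E →L[ℂ] E) lam' - A) x = y + d • x := by
      rw [hB']
      simp only [add_apply, smul_apply, ContinuousLinearMap.one_apply, hx1]
    have h2 : R (y + d • x) = x := by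
      have := congrArg (fun (M : E →L[ℂ] E) => M x) hRB
      simp only [ContinuousLinearMap.mul_apply, ContinuousLinearMap.one_apply] at this
      rw [← h1]; exact this
    have h3 : R y = x - d • R x := by
      have : R y + R (d • x) = x := by rw [← map_add]; exact h2
      rw [map_smul] at this
      linear_combination (norm := module) this
    calc ‖R y‖ = ‖x - d • R x‖ := by rw [h3]
    _ ≤ ‖x‖ + ‖d • R x‖ := norm_sub_le _ _
    _ = ‖x‖ + ‖d‖ * ‖R x‖ := by rw [norm_smul]
    _ ≤ C * ‖y‖ + ‖d‖ * (‖R‖ * (C * ‖y‖)) := by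
        have h4 : ‖d‖ * ‖R x‖ ≤ ‖d‖ * (‖R‖ * ‖x‖) :=
          mul_le_mul_of_nonneg_left (R.le_opNorm x) (norm_nonneg d)
        have h5 : ‖d‖ * (‖R‖ * ‖x‖) ≤ ‖d‖ * (‖R‖ * (C * ‖y‖)) := by
          have h6 := mul_le_mul_of_nonneg_left hx2 (norm_nonneg R)
          exact mul_le_mul_of_nonneg_left h6 (norm_nonneg d)
        linarith
    _ = (C + ‖d‖ * ‖R‖ * C) * ‖y‖ := by ring
  have hRnorm : ‖R‖ ≤ C + ‖d‖ * ‖R‖ * C := by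
    apply ContinuousLinearMap.opNorm_le_bound
    · have h6 := mul_nonneg (mul_nonneg (norm_nonneg d) (norm_nonneg (R : E →L[ℂ] E))) hCpos.le
      linarith
    · exact hRptbound
  have hdC : ‖d‖ * C < 1 / 4 := by
    have h1 : ‖d‖ * C < (1 / (4 * C)) * C := mul_lt_mul_of_pos_right hdn hCpos
    have h2 : (1 / (4 * C)) * C = 1 / 4 := by field_simp
    linarith
  have hRle : ‖R‖ ≤ 2 * C := by
    have h6 : ‖R‖ * (‖d‖ * C) ≤ ‖R‖ * (1 / 4) :=
      mul_le_mul_of_nonneg_left hdC.le (norm_nonneg _)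
    have h7 : ‖d‖ * ‖R‖ * C = ‖R‖ * (‖d‖ * C) := by ring
    have h8 := norm_nonneg (R : E →L[ℂ] E)
    linarith
  -- 1 - d • R is a unit
  have hsmall : ‖d • R‖ < 1 := by
    have h1 : ‖d • R‖ = ‖d‖ * ‖R‖ := norm_smul d R
    have h2 : ‖d‖ * ‖R‖ ≤ ‖d‖ * (2 * C) := mul_le_mul_of_nonneg_left hRle (norm_nonneg d)
    have h3 : ‖d‖ * (2 * C) = 2 * (‖d‖ * C) := by ring
    linarith
  have hBunit : IsUnit B := by
    have hfac : B = (algebraMap ℂ (E →L[ℂ] E) lam' - A) * (1 - d • R) := by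
      rw [mul_sub, mul_one, mul_smul_comm, hBR, hB', add_sub_cancel_right]
    rw [hfac]
    exact hunit.mul (Units.oneSub (d • R) hsmall).isUnit
  exact spectrum.mem_iff.1 hlam_mem hBunit

/-- If `X = W ⊕ N(T)` with projection `P` onto `W` along `N(T)`, and `S = P T|_W`,
then `σ_su(S) ⊆ σ_su(T) ⊆ σ_su(S) ∪ {0}`; if moreover `W ≠ 0` and `σ_su(T)`
is connected, then `σ_su(T) = σ_su(S)`. -/
theorem surjSpectrum_compression
    {X : Type*} [NormedAddCommGroup X] [NormedSpace ℂ X] [CompleteSpace X]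
    (T : X →L[ℂ] X) (W : Submodule ℂ X) (hWc : IsClosed (W : Set X))
    (hcompl : IsCompl W (LinearMap.ker (T : X →ₗ[ℂ] X)))
    (P : X →L[ℂ] X) (hPrange : ∀ x : X, P x ∈ W)
    (hPfix : ∀ w ∈ W, P w = w) (hPker : ∀ x ∈ LinearMap.ker (T : X →ₗ[ℂ] X), P x = 0)
    (S : ↥W →L[ℂ] ↥W) (hS : ∀ w : ↥W, (S w : X) = P (T (w : X))) :
    surjSpectrum S ⊆ surjSpectrum T ∧
    surjSpectrum T ⊆ surjSpectrum S ∪ {0} ∧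
    (W ≠ ⊥ → IsConnected (surjSpectrum T) → surjSpectrum T = surjSpectrum S) := by
  haveI : CompleteSpace W := hWc.completeSpace_coe
  -- every x decomposes with x - P x ∈ ker T
  have hker : ∀ x : X, x - P x ∈ LinearMap.ker (T : X →ₗ[ℂ] X) := by
    intro x
    have hx : x ∈ W ⊔ LinearMap.ker (T : X →ₗ[ℂ] X) := hcompl.codisjoint.eq_top ▸ Submodule.mem_top
    rcases Submodule.mem_sup.1 hx with ⟨w, hw, n, hn, rfl⟩
    have hP : P (w + n) = w := by rw [map_add, hPfix w hw, hPker n hn, add_zero]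
    rw [hP, add_sub_cancel_left]
    exact hn
  have hTP : ∀ x : X, T (P x) = T x := by
    intro x
    have h := hker x
    rw [LinearMap.mem_ker, map_sub, sub_eq_zero] at h
    exact h.symm
  have part1 : surjSpectrum S ⊆ surjSpectrum T := by
    intro z hz
    simp only [surjSpectrum, Set.mem_setOf_eq] at hz ⊢
    intro hT
    apply hz
    intro w
    obtain ⟨x, hx'⟩ := hT (w : X)
    have hx : z • x - T x = (w : X) := hx'
    refine ⟨⟨P x, hPrange x⟩, ?_⟩
    apply Subtype.ext
    push_cast
    rw [hS ⟨P x, hPrange x⟩]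
    show z • P x - P (T (P x)) = (w : X)
    rw [hTP x, ← map_smul, ← map_sub, hx, hPfix _ w.2]
  have part2 : surjSpectrum T ⊆ surjSpectrum S ∪ {0} := by
    intro z hz
    by_cases h0 : z = 0
    · right; exact h0
    left
    simp only [surjSpectrum, Set.mem_setOf_eq] at hz ⊢
    intro hSsurj
    apply hz
    intro y
    have hy : y ∈ W ⊔ LinearMap.ker (T : X →ₗ[ℂ] X) := hcompl.codisjoint.eq_top ▸ Submodule.mem_top
    rcases Submodule.mem_sup.1 hy with ⟨w, hw, n, hn, rfl⟩
    obtain ⟨v, hv'⟩ := hSsurj ⟨w, hw⟩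
    have hv : z • v - S v = (⟨w, hw⟩ : W) := hv'
    have hvX : z • (v : X) - P (T (v : X)) = w := by
      have h9 := congrArg (Subtype.val) hv
      push_cast at h9
      rwa [hS v] at h9
    set k : X := T (v : X) - P (T (v : X)) with hk
    have hkker : k ∈ LinearMap.ker (T : X →ₗ[ℂ] X) := hker (T (v : X))
    refine ⟨(v : X) + z⁻¹ • (n + k), ?_⟩
    have hTm : T (z⁻¹ • (n + k)) = 0 := by
      rw [map_smul, map_add]
      rw [LinearMap.mem_ker, ContinuousLinearMap.coe_coe] at hn hkker
      rw [hn, hkker, add_zero, smul_zero]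
    show z • ((v : X) + z⁻¹ • (n + k)) - T ((v : X) + z⁻¹ • (n + k)) = w + n
    rw [map_add, hTm, add_zero, smul_add, smul_smul, mul_inv_cancel₀ h0, one_smul]
    rw [← hvX, hk]
    module
  refine ⟨part1, part2, ?_⟩
  intro hW hconn
  haveI : Nontrivial W := Submodule.nontrivial_iff_ne_bot.2 hW
  apply Set.Subset.antisymm _ part1
  intro z hz
  rcases part2 hz with h | h
  · exact h
  · -- z = 0; show 0 ∈ surjSpectrum S
    rw [Set.mem_singleton_iff] at h
    subst h
    by_contra h0S
    -- disconnect surjSpectrum T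
    have hUopen : IsOpen (surjSpectrum S)ᶜ := isOpen_compl_surjSpectrum S
    have hVopen : IsOpen ({(0 : ℂ)}ᶜ) := isOpen_compl_singleton
    obtain ⟨a, ha⟩ := surjSpectrum_nonempty S
    have ha0 : a ≠ 0 := fun h => h0S (h ▸ ha)
    have hcover : surjSpectrum T ⊆ (surjSpectrum S)ᶜ ∪ {(0 : ℂ)}ᶜ := by
      intro w hw
      rcases part2 hw with h | h
      · right; exact fun hc => h0S (hc ▸ h)
      · left; rw [Set.mem_singleton_iff] at h; subst h; exact h0S
    have h1 : (surjSpectrum T ∩ (surjSpectrum S)ᶜ).Nonempty := ⟨0, hz, h0S⟩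
    have h2 : (surjSpectrum T ∩ {(0 : ℂ)}ᶜ).Nonempty := ⟨a, part1 ha, ha0⟩
    obtain ⟨b, hbT, hbS, hb0⟩ := hconn.isPreconnected _ _ hUopen hVopen hcover h1 h2
    rcases part2 hbT with h | h
    · exact hbS h
    · exact hb0 h
end
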